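/- Let l ≥ 1 be an integer not divisible by 8. Write the l-th iterate of g as g^l(x,y) = (X_l(x,y), Y_l(x,y)) with X_l, Y_l ∈ ℤ[x,y], and let X̄_l, Ȳ_l ∈ 𝔽₃[x,y] denote their reductions modulo 3. Then the 𝔽₃-algebra 𝔽₃[x,y]/(X̄_l − x, Ȳ_l − y) is étale over 𝔽₃ (formally étale and of finite presentation). -/

import Mathlib

open MvPolynomial

/-- The coordinate polynomials (over `ℤ`) of the Hénon map `g(x,y) = (y, x + y - y³)`. -/
noncomputable def gPoly : Fin 2 → MvPolynomial (Fin 2) ℤ :=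
  ![X 1, X 0 + X 1 - (X 1) ^ 3]

/-- Coordinate polynomials of the `l`-th iterate `g^l(x,y) = (X_l(x,y), Y_l(x,y))`. -/
noncomputable def gPolyIter : ℕ → Fin 2 → MvPolynomial (Fin 2) ℤ
  | 0 => fun i => X i
  | n + 1 => fun i => bind₁ gPoly (gPolyIter n i)

/-- Reduction modulo 3 of integral polynomials. -/
noncomputable def red3 : MvPolynomial (Fin 2) ℤ →+* MvPolynomial (Fin 2) (ZMod 3) :=
  MvPolynomial.map (Int.castRingHom (ZMod 3))

def Amat : Matrix (Fin 2) (Fin 2) (ZMod 3) := !![0, 1; 1, 1]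

lemma red3_gPoly0 : red3 (gPoly 0) = X 1 := by
  simp [gPoly, red3]

lemma red3_gPoly1 : red3 (gPoly 1) = X 0 + X 1 - (X 1) ^ 3 := by
  simp [gPoly, red3]

lemma key (n : ℕ) : ∀ (B : Type) [CommRing B] [Algebra (ZMod 3) B] (c e : Fin 2 → B),
    (∀ j k, e j * e k = 0) → ∀ i : Fin 2,
    aeval (fun j => c j + e j) (red3 (gPolyIter n i)) =
      aeval c (red3 (gPolyIter n i)) + (Amat ^ n) i 0 • e 0 + (Amat ^ n) i 1 • e 1 := by
  induction n with
  | zero =>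
    intro B _ _ c e he i
    simp only [gPolyIter, red3, map_X, aeval_X, pow_zero]
    fin_cases i <;> simp [Matrix.one_apply] <;> abel
  | succ n ih =>
    intro B _ _ c e he i
    have h3 : (3 : B) = 0 := by
      have h := map_ofNat (algebraMap (ZMod 3) B) 3
      rw [show ((OfNat.ofNat 3 : ZMod 3)) = 0 from rfl, map_zero] at h
      exact h.symm
    set c' : Fin 2 → B := ![c 1, c 0 + c 1 - (c 1) ^ 3] with hc'
    set e' : Fin 2 → B := ![e 1, e 0 + e 1] with he'
    have he'z : ∀ j k, e' j * e' k = 0 := by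
      have h00 : e' 0 * e' 0 = 0 := by
        simp only [he', Matrix.cons_val_zero]; exact he 1 1
      have h01 : e' 0 * e' 1 = 0 := by
        simp only [he', Matrix.cons_val_zero, Matrix.cons_val_one, Matrix.head_cons]
        linear_combination he 1 0 + he 1 1
      have h10 : e' 1 * e' 0 = 0 := by
        simp only [he', Matrix.cons_val_zero, Matrix.cons_val_one, Matrix.head_cons]
        linear_combination he 0 1 + he 1 1
      have h11 : e' 1 * e' 1 = 0 := by
        simp only [he', Matrix.cons_val_zero, Matrix.cons_val_one, Matrix.head_cons]
        linear_combination he 0 0 + he 0 1 + he 1 0 + he 1 1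
      intro j k
      fin_cases j <;> fin_cases k <;> assumption
    have hred : red3 (gPolyIter (n+1) i) =
        bind₁ (fun j => red3 (gPoly j)) (red3 (gPolyIter n i)) := by
      show MvPolynomial.map _ (bind₁ gPoly (gPolyIter n i)) = _
      rw [map_bind₁]; rfl
    have hcube : (c 1 + e 1) ^ 3 = (c 1) ^ 3 := by
      linear_combination (3 * c 1 + e 1) * he 1 1 + ((c 1) ^ 2 * e 1) * h3
    have hev1 : (fun j => aeval (fun k => c k + e k) (red3 (gPoly j))) =
        fun j => c' j + e' j := by
      funext j
      fin_cases j
      · show aeval (fun k => c k + e k) (red3 (gPoly 0)) = c' 0 + e' 0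
        simp [red3_gPoly0, hc', he']
      · show aeval (fun k => c k + e k) (red3 (gPoly 1)) = c' 1 + e' 1
        simp only [red3_gPoly1, map_sub, map_add, map_pow, aeval_X, hc', he',
          Matrix.cons_val_zero, Matrix.cons_val_one, Matrix.head_cons]
        rw [hcube]; ring
    have hev0 : (fun j => aeval c (red3 (gPoly j))) = c' := by
      funext j
      fin_cases j
      · show aeval c (red3 (gPoly 0)) = c' 0
        simp [red3_gPoly0, hc']
      · show aeval c (red3 (gPoly 1)) = c' 1
        simp [red3_gPoly1, hc']
    rw [hred, aeval_bind₁, aeval_bind₁, hev1, hev0, ih B c' e' he'z i]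
    have hA0 : (Amat ^ (n+1)) i 0 = (Amat ^ n) i 1 := by
      rw [pow_succ, Matrix.mul_apply, Fin.sum_univ_two]
      simp [Amat]
    have hA1 : (Amat ^ (n+1)) i 1 = (Amat ^ n) i 0 + (Amat ^ n) i 1 := by
      rw [pow_succ, Matrix.mul_apply, Fin.sum_univ_two]
      simp [Amat]
    rw [hA0, hA1]
    simp only [he', Matrix.cons_val_zero, Matrix.cons_val_one, Matrix.head_cons]
    match_scalars <;> ring

lemma CmatUnit (l : ℕ) (h8 : ¬ (8 ∣ l)) : IsUnit (Amat ^ l - 1) := by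
  have hA8 : Amat ^ 8 = 1 := by decide
  have hmod : Amat ^ l = Amat ^ (l % 8) := by
    conv_lhs => rw [← Nat.div_add_mod l 8]
    rw [pow_add, pow_mul, hA8, one_pow, one_mul]
  rw [hmod]
  have hlt : l % 8 < 8 := Nat.mod_lt _ (by norm_num)
  have hne : l % 8 ≠ 0 := fun h => h8 (Nat.dvd_of_mod_eq_zero h)
  have h1 : 1 ≤ l % 8 := Nat.one_le_iff_ne_zero.2 hne
  interval_cases h : l % 8 <;>
    · rw [Matrix.isUnit_iff_isUnit_det, isUnit_iff_ne_zero]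
      decide

/-- For `l ≥ 1` not divisible by `8`, the `𝔽₃`-algebra
`𝔽₃[x,y]/(X̄_l - x, Ȳ_l - y)` is étale over `𝔽₃`. -/
theorem stmt5 (l : ℕ) (hl : 1 ≤ l) (h8 : ¬ (8 ∣ l)) :
    Algebra.Etale (ZMod 3)
      (MvPolynomial (Fin 2) (ZMod 3) ⧸
        Ideal.span {red3 (gPolyIter l 0) - X 0, red3 (gPolyIter l 1) - X 1}) := by
  set P : Fin 2 → MvPolynomial (Fin 2) (ZMod 3) :=
    fun i => red3 (gPolyIter l i) - X i with hP
  set J : Ideal (MvPolynomial (Fin 2) (ZMod 3)) := Ideal.span {P 0, P 1} with hJ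
  set C : Matrix (Fin 2) (Fin 2) (ZMod 3) := Amat ^ l - 1 with hC
  obtain ⟨u, hu⟩ := CmatUnit l h8
  set D : Matrix (Fin 2) (Fin 2) (ZMod 3) := ↑u⁻¹ with hD
  have hDC : D * C = 1 := by rw [hD, hC, ← hu]; exact u.inv_mul
  have hCD : C * D = 1 := by rw [hD, hC, ← hu]; exact u.mul_inv
  have hDCe : ∀ j k : Fin 2, D j 0 * C 0 k + D j 1 * C 1 k =
      (1 : Matrix (Fin 2) (Fin 2) (ZMod 3)) j k := by
    intro j k; rw [← hDC, Matrix.mul_apply, Fin.sum_univ_two]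
  have hCDe : ∀ j k : Fin 2, C j 0 * D 0 k + C j 1 * D 1 k =
      (1 : Matrix (Fin 2) (Fin 2) (ZMod 3)) j k := by
    intro j k; rw [← hCD, Matrix.mul_apply, Fin.sum_univ_two]
  have keyP : ∀ (B : Type) [CommRing B] [Algebra (ZMod 3) B] (c e : Fin 2 → B),
      (∀ j k, e j * e k = 0) → ∀ i : Fin 2,
      aeval (fun j => c j + e j) (P i) =
        aeval c (P i) + C i 0 • e 0 + C i 1 • e 1 := by
    intro B _ _ c e he i
    simp only [hP, map_sub, aeval_X, key l B c e he i, hC, Matrix.sub_apply,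
      Matrix.one_apply]
    fin_cases i <;> simp <;> match_scalars <;> ring
  have hPmemJ : ∀ i : Fin 2, P i ∈ J := by
    intro i
    rw [hJ]
    refine Ideal.subset_span ?_
    fin_cases i
    · exact Set.mem_insert _ _
    · exact Set.mem_insert_of_mem _ rfl
  constructor
  case finitePresentation =>
    exact Algebra.FinitePresentation.quotient (Submodule.fg_span (Set.toFinite _))
  case formallyEtale =>
    rw [Algebra.FormallyEtale.iff_comp_bijective]
    intro B _ _ I hI
    have hzero : ∀ a b : B, a ∈ I → b ∈ I → a * b = 0 := by
      intro a b ha hb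
      have : a * b ∈ I ^ 2 := by rw [pow_two]; exact Ideal.mul_mem_mul ha hb
      rwa [hI, Ideal.mem_bot] at this
    have hsmul : ∀ (a : ZMod 3) (b : B), b ∈ I → a • b ∈ I := by
      intro a b hb
      rw [Algebra.smul_def]; exact Ideal.mul_mem_left _ _ hb
    have hcomp : ∀ (B' : Type) [CommRing B'] [Algebra (ZMod 3) B']
        (h : _ →ₐ[ZMod 3] B') (v : Fin 2 → B'),
        (∀ i, h (Ideal.Quotient.mk J (X i)) = v i) →
        ∀ i : Fin 2, aeval v (P i) = 0 := by
      intro B' _ _ h v hv i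
      have hh : h.comp (Ideal.Quotient.mkₐ (ZMod 3) J) = aeval v := by
        apply MvPolynomial.algHom_ext
        intro j
        simp only [AlgHom.comp_apply, Ideal.Quotient.mkₐ_eq_mk, aeval_X]
        exact hv j
      calc aeval v (P i) = h.comp (Ideal.Quotient.mkₐ (ZMod 3) J) (P i) := by rw [hh]
        _ = h (Ideal.Quotient.mk J (P i)) := rfl
        _ = h 0 := by rw [Ideal.Quotient.eq_zero_iff_mem.2 (hPmemJ i)]
        _ = 0 := map_zero h
    constructor
    · -- injectivity
      intro f g hfg
      set c : Fin 2 → B := fun i => f (Ideal.Quotient.mk J (X i)) with hcdef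
      set d : Fin 2 → B := fun i => g (Ideal.Quotient.mk J (X i)) with hddef
      set e : Fin 2 → B := fun i => d i - c i with hedef
      have heI : ∀ i, e i ∈ I := by
        intro i
        have h1 : Ideal.Quotient.mk I (c i) = Ideal.Quotient.mk I (d i) := by
          have := congrArg (fun h : _ →ₐ[ZMod 3] B ⧸ I => h (Ideal.Quotient.mk J (X i))) hfg
          simpa using this
        exact Ideal.Quotient.eq.1 h1.symm
      have he : ∀ j k, e j * e k = 0 := fun j k => hzero _ _ (heI j) (heI k)
      have hde : (fun j => c j + e j) = d := by funext j; simp [hedef]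
      have hCe : ∀ i : Fin 2, C i 0 • e 0 + C i 1 • e 1 = 0 := by
        intro i
        have hk := keyP B c e he i
        rw [hde, hcomp B f c (fun _ => rfl) i, hcomp B g d (fun _ => rfl) i] at hk
        simpa using hk.symm
      have hez : ∀ j : Fin 2, e j = 0 := by
        intro j
        have h0 := hCe 0
        have h1 := hCe 1
        have hsum : e j = D j 0 • (C 0 0 • e 0 + C 0 1 • e 1) +
            D j 1 • (C 1 0 • e 0 + C 1 1 • e 1) := by
          have k0 := hDCe j 0
          have k1 := hDCe j 1
          calc e j = (1 : Matrix (Fin 2) (Fin 2) (ZMod 3)) j 0 • e 0 +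
                (1 : Matrix (Fin 2) (Fin 2) (ZMod 3)) j 1 • e 1 := by
                fin_cases j <;> simp [Matrix.one_apply]
            _ = (D j 0 * C 0 0 + D j 1 * C 1 0) • e 0 +
                (D j 0 * C 0 1 + D j 1 * C 1 1) • e 1 := by rw [k0, k1]
            _ = D j 0 • (C 0 0 • e 0 + C 0 1 • e 1) +
                D j 1 • (C 1 0 • e 0 + C 1 1 • e 1) := by
                match_scalars <;> ring
        rw [h0, h1, smul_zero, smul_zero, add_zero] at hsum
        exact hsum
      have hcd : c = d := by
        funext j
        have := hez j
        rw [hedef] at this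
        have h2 : d j - c j = 0 := this
        exact (sub_eq_zero.mp h2).symm
      apply Ideal.Quotient.algHom_ext
      apply MvPolynomial.algHom_ext
      intro i
      have := congrFun hcd i
      simpa [hcdef, hddef] using this
    · -- surjectivity
      intro f
      have hex : ∀ i : Fin 2, ∃ b : B, Ideal.Quotient.mk I b =
          f (Ideal.Quotient.mk J (X i)) := fun i => Ideal.Quotient.mk_surjective _
      choose c hc using hex
      set t : Fin 2 → B := fun i => aeval c (P i) with ht
      have hmkc : ∀ p : MvPolynomial (Fin 2) (ZMod 3),
          Ideal.Quotient.mk I (aeval c p) =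
            aeval (fun i => Ideal.Quotient.mk I (c i)) p := by
        intro p
        have : (Ideal.Quotient.mkₐ (ZMod 3) I).comp (aeval c) =
            aeval (fun i => Ideal.Quotient.mk I (c i)) := by
          apply MvPolynomial.algHom_ext
          intro j
          simp
        exact congrArg (fun h : _ →ₐ[ZMod 3] B ⧸ I => h p) this
      have htI : ∀ i, t i ∈ I := by
        intro i
        rw [← Ideal.Quotient.eq_zero_iff_mem, ht]
        rw [hmkc]
        exact hcomp (B ⧸ I) f _ (fun j => (hc j).symm ▸ rfl) i
      set e : Fin 2 → B := fun j => -(D j 0 • t 0 + D j 1 • t 1) with hedef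
      have heI : ∀ j, e j ∈ I := by
        intro j
        rw [hedef]
        exact neg_mem (add_mem (hsmul _ _ (htI 0)) (hsmul _ _ (htI 1)))
      have he : ∀ j k, e j * e k = 0 := fun j k => hzero _ _ (heI j) (heI k)
      have hgP : ∀ i : Fin 2, aeval (fun j => c j + e j) (P i) = 0 := by
        intro i
        rw [keyP B c e he i]
        have hsum : C i 0 • e 0 + C i 1 • e 1 = -(t i) := by
          have k0 := hCDe i 0
          have k1 := hCDe i 1
          calc C i 0 • e 0 + C i 1 • e 1
              = -((C i 0 * D 0 0 + C i 1 * D 1 0) • t 0 +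
                  (C i 0 * D 0 1 + C i 1 * D 1 1) • t 1) := by
                simp only [hedef]; match_scalars <;> ring
            _ = -((1 : Matrix (Fin 2) (Fin 2) (ZMod 3)) i 0 • t 0 +
                  (1 : Matrix (Fin 2) (Fin 2) (ZMod 3)) i 1 • t 1) := by rw [k0, k1]
            _ = -(t i) := by fin_cases i <;> simp [Matrix.one_apply]
        rw [add_assoc, hsum]
        simp [ht]
      set g0 : MvPolynomial (Fin 2) (ZMod 3) →ₐ[ZMod 3] B :=
        aeval (fun j => c j + e j) with hg0
      have hker : ∀ a ∈ J, g0 a = 0 := by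
        intro a ha
        rw [hJ] at ha
        have hle : Ideal.span {P 0, P 1} ≤ RingHom.ker g0 := by
          rw [Ideal.span_le]
          rintro p hp
          simp only [Set.mem_insert_iff, Set.mem_singleton_iff] at hp
          rcases hp with rfl | rfl
          · exact hgP 0
          · exact hgP 1
        exact hle ha
      refine ⟨Ideal.Quotient.liftₐ J g0 hker, ?_⟩
      apply Ideal.Quotient.algHom_ext
      apply MvPolynomial.algHom_ext
      intro i
      simp only [AlgHom.comp_apply, Ideal.Quotient.mkₐ_eq_mk]
      rw [Ideal.Quotient.liftₐ_apply]
      show Ideal.Quotient.mk I ((g0 : MvPolynomial (Fin 2) (ZMod 3) →+* B) (X i)) = _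
      have : g0 (X i) = c i + e i := by simp [hg0]
      rw [show (g0 : MvPolynomial (Fin 2) (ZMod 3) →+* B) (X i) = c i + e i from this]
      rw [map_add, Ideal.Quotient.eq_zero_iff_mem.2 (heI i), add_zero, hc i]
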